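/- Let B1, B2 be I-crystals with 0 ∈ I, each equipped with a weight map wt into an abelian group P with distinguished elements α_i (i ∈ I), satisfying wt(e_i b) = wt(b) + α_i whenever e_i b ≠ 0. Let t ∈ I with t ≠ 0, let τ be a permutation of I with τ(t) = 0, and let ϖ^∨ : P → ℤ be a group homomorphism with ϖ^∨(α_j) = δ_{jt} for all j ∈ I ∖ {0} and ϖ^∨(α_0) = −1. Suppose given bijections τ_1 : B1 → B1 and τ_2 : B2 → B2 with τ_j ∘ e_i = e_{τ(i)} ∘ τ_j and τ_j ∘ f_i = f_{τ(i)} ∘ τ_j for all i ∈ I (j = 1, 2; with τ_j(0) = 0), an isomorphism of I-crystals σ : B1 ⊗ B2 → B2 ⊗ B1 satisfying σ(τ_1 b1 ⊗ τ_2 b2) = τ_2 b̃2 ⊗ τ_1 b̃1 whenever σ(b1 ⊗ b2) = b̃2 ⊗ b̃1, and a local energy function H : B1 ⊗ B2 → ℤ with respect to σ. Assume there exist u1 ∈ B1, u2 ∈ B2 such that σ(u1 ⊗ u2) = u2 ⊗ u1, H(τ_1 u1 ⊗ τ_2 u2) = H(u1 ⊗ u2), and every element of B1 ⊗ B2 has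 the form e_{i_k} ⋯ e_{i_1}(u1 ⊗ u2) for some k ≥ 0 and i_1, …, i_k ∈ I. Then for every b1 ∈ B1, b2 ∈ B2, writing σ(b1 ⊗ b2) = b̃2 ⊗ b̃1, one has H(b1 ⊗ b2) − H(τ_1 b1 ⊗ τ_2 b2) = ϖ^∨(wt(b2)) − ϖ^∨(wt(b̃2)). -/

import Mathlib

/-- An `I`-crystal on a carrier `B`: raising/lowering operators `e i, f i : B → B ⊔ {0}`
(encoded via `Option B`), mutually inverse where defined, with all strings finite. -/
structure Crystal (I : Type*) (B : Type*) where
  e : I → B → Option B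
  f : I → B → Option B
  ef : ∀ (i : I) (b b' : B), e i b = some b' → f i b' = some b
  fe : ∀ (i : I) (b b' : B), f i b = some b' → e i b' = some b
  e_bounded : ∀ (i : I) (b : B), ∃ k : ℕ, (fun o => o.bind (e i))^[k] (some b) = none
  f_bounded : ∀ (i : I) (b : B), ∃ k : ℕ, (fun o => o.bind (f i))^[k] (some b) = none

/-- The largest `k` such that `e^k b ≠ 0`, for a partial map `e : B → B ⊔ {0}`. -/
noncomputable def epsOf {B : Type*} (e : B → Option B) (b : B) : ℕ :=
  sSup {k : ℕ | (fun o => o.bind e)^[k] (some b) ≠ none}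

/-- `ε_i(b) = max {k ≥ 0 | e_i^k b ≠ 0}`. -/
noncomputable def Crystal.eps {I B : Type*} (c : Crystal I B) (i : I) (b : B) : ℕ :=
  epsOf (c.e i) b

/-- `φ_i(b) = max {k ≥ 0 | f_i^k b ≠ 0}`. -/
noncomputable def Crystal.phi {I B : Type*} (c : Crystal I B) (i : I) (b : B) : ℕ :=
  epsOf (c.f i) b

/-- The raising operators of the tensor product crystal `B1 ⊗ B2`. -/
noncomputable def tensorE {I B1 B2 : Type*} (c1 : Crystal I B1) (c2 : Crystal I B2)
    (i : I) (p : B1 × B2) : Option (B1 × B2) :=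
  if c2.eps i p.2 ≤ c1.phi i p.1 then (c1.e i p.1).map (fun x => (x, p.2))
  else (c2.e i p.2).map (fun x => (p.1, x))

/-- The lowering operators of the tensor product crystal `B1 ⊗ B2`. -/
noncomputable def tensorF {I B1 B2 : Type*} (c1 : Crystal I B1) (c2 : Crystal I B2)
    (i : I) (p : B1 × B2) : Option (B1 × B2) :=
  if c2.eps i p.2 < c1.phi i p.1 then (c1.f i p.1).map (fun x => (x, p.2))
  else (c2.f i p.2).map (fun x => (p.1, x))

/-- `e_i` acts on the first tensor factor of `p = a ⊗ b` iff `φ_i(a) ≥ ε_i(b)`. -/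
def actsLeft {I A B : Type*} (cA : Crystal I A) (cB : Crystal I B) (i : I) (p : A × B) : Prop :=
  cB.eps i p.2 ≤ cA.phi i p.1

noncomputable instance {I A B : Type*} (cA : Crystal I A) (cB : Crystal I B) (i : I)
    (p : A × B) : Decidable (actsLeft cA cB i p) :=
  inferInstanceAs (Decidable (cB.eps i p.2 ≤ cA.phi i p.1))

/-- `σ : B1 ⊗ B2 → B2 ⊗ B1` is an isomorphism of `I`-crystals: a bijection commuting with
all `e_i` and `f_i` (sending `0` to `0`). -/
structure IsCrystalIso {I B1 B2 : Type*} (c1 : Crystal I B1) (c2 : Crystal I B2)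
    (σ : B1 × B2 → B2 × B1) : Prop where
  bij : Function.Bijective σ
  comm_e : ∀ (i : I) (p : B1 × B2), Option.map σ (tensorE c1 c2 i p) = tensorE c2 c1 i (σ p)
  comm_f : ∀ (i : I) (p : B1 × B2), Option.map σ (tensorF c1 c2 i p) = tensorF c2 c1 i (σ p)

/-- `H : B1 ⊗ B2 → ℤ` is a local energy function with respect to `σ`: it is unchanged by
`e_i` for `i ≠ 0`, and changes by `+1` (resp. `−1`, resp. `0`) under `e_0` according to
whether `e_0` acts on the left (resp. right, resp. mixed) factors of `x` and `σ(x)`. -/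
structure IsLocalEnergy {I B1 B2 : Type*} (i0 : I) (c1 : Crystal I B1) (c2 : Crystal I B2)
    (σ : B1 × B2 → B2 × B1) (H : B1 × B2 → ℤ) : Prop where
  ne_zero : ∀ (i : I), i ≠ i0 → ∀ (x y : B1 × B2), tensorE c1 c2 i x = some y → H y = H x
  zero_LL : ∀ (x y : B1 × B2), tensorE c1 c2 i0 x = some y →
    actsLeft c1 c2 i0 x → actsLeft c2 c1 i0 (σ x) → H y = H x + 1
  zero_RR : ∀ (x y : B1 × B2), tensorE c1 c2 i0 x = some y →
    ¬ actsLeft c1 c2 i0 x → ¬ actsLeft c2 c1 i0 (σ x) → H y = H x - 1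
  zero_mixed : ∀ (x y : B1 × B2), tensorE c1 c2 i0 x = some y →
    ¬ (actsLeft c1 c2 i0 x ↔ actsLeft c2 c1 i0 (σ x)) → H y = H x

/-- Apply a sequence of operators `e_{j_1}, …, e_{j_ℓ}` (in this order) to `x`. -/
def applyList {I X : Type*} (step : I → X → Option X) (J : List I) (x : X) : Option X :=
  J.foldl (fun o j => o.bind (step j)) (some x)

/-- Along the application of `e_{j_1}, …, e_{j_ℓ}` to `p ∈ A ⊗ B`, count the steps with
`j_q = i0` that act on the first factor (if `onFirst = true`) resp. on the second factor
(if `onFirst = false`), following the tensor-product rule. -/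
noncomputable def zeroCount {I A B : Type*} [DecidableEq I] (cA : Crystal I A)
    (cB : Crystal I B) (i0 : I) (onFirst : Bool) : List I → A × B → ℕ
  | [], _ => 0
  | j :: J, p =>
      (if j = i0 ∧ (actsLeft cA cB j p ↔ onFirst = true) then 1 else 0) +
        (tensorE cA cB j p).elim 0 (zeroCount cA cB i0 onFirst J)

/-- for a Dynkin automorphism `τ` with `τ(t) = 0` acting compatibly on `B1`,
`B2`, commuting with `σ`, and normalized on a generating element `u1 ⊗ u2`, one has
`H(b1 ⊗ b2) − H(τ b1 ⊗ τ b2) = ϖ^∨(wt(b2)) − ϖ^∨(wt(b̃2))` where `σ(b1 ⊗ b2) = b̃2 ⊗ b̃1`. -/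

lemma iterBind_map {B B' : Type*} (e : B → Option B) (e' : B' → Option B') (g : B → B')
    (h : ∀ b, Option.map g (e b) = e' (g b)) (k : ℕ) (b : B) :
    (fun o => o.bind e')^[k] (some (g b)) = Option.map g ((fun o => o.bind e)^[k] (some b)) := by
  induction k with
  | zero => simp
  | succ k ih =>
    rw [Function.iterate_succ_apply', Function.iterate_succ_apply', ih]
    cases h' : (fun o => o.bind e)^[k] (some b) with
    | none => simp
    | some c => simpa using (h c).symm

lemma epsOf_map {B B' : Type*} (e : B → Option B) (e' : B' → Option B') (g : B → B')
    (h : ∀ b, Option.map g (e b) = e' (g b)) (b : B) :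
    epsOf e' (g b) = epsOf e b := by
  unfold epsOf
  congr 1
  ext k
  simp [Set.mem_setOf_eq, iterBind_map e e' g h k b, Option.map_eq_none_iff]

lemma tensorE_eq {I A B : Type*} (cA : Crystal I A) (cB : Crystal I B) (i : I)
    (p q : A × B) (h : tensorE cA cB i p = some q) :
    (actsLeft cA cB i p ∧ cA.e i p.1 = some q.1 ∧ q.2 = p.2) ∨
    (¬ actsLeft cA cB i p ∧ cB.e i p.2 = some q.2 ∧ q.1 = p.1) := by
  unfold tensorE at h
  unfold actsLeft
  split_ifs at h with hc
  · cases he : cA.e i p.1 with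
    | none => rw [he] at h; simp at h
    | some x =>
        rw [he] at h
        simp only [Option.map_some, Option.some.injEq] at h
        refine Or.inl ⟨hc, ?_, ?_⟩
        · rw [← h]
        · rw [← h]
  · cases he : cB.e i p.2 with
    | none => rw [he] at h; simp at h
    | some x =>
        rw [he] at h
        simp only [Option.map_some, Option.some.injEq] at h
        refine Or.inr ⟨hc, ?_, ?_⟩
        · rw [← h]
        · rw [← h]

lemma foldl_bind_none {I X : Type*} (step : I → X → Option X) (J : List I) :
    J.foldl (fun o j => o.bind (step j)) none = none := by
  induction J with
  | nil => rfl
  | cons j J ih => simpa using ih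

theorem local_energy_twist {I B1 B2 P : Type*} [DecidableEq I] [AddCommGroup P] (i0 : I)
    (c1 : Crystal I B1) (c2 : Crystal I B2)
    (α : I → P) (wt1 : B1 → P) (wt2 : B2 → P)
    (hwt1 : ∀ (i : I) (b b' : B1), c1.e i b = some b' → wt1 b' = wt1 b + α i)
    (hwt2 : ∀ (i : I) (b b' : B2), c2.e i b = some b' → wt2 b' = wt2 b + α i)
    (t : I) (ht : t ≠ i0) (τ : Equiv.Perm I) (hτt : τ t = i0)
    (ϖ : P →+ ℤ) (hϖ : ∀ j, j ≠ i0 → ϖ (α j) = if j = t then 1 else 0)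
    (hϖ0 : ϖ (α i0) = -1)
    (τ1 : B1 → B1) (τ2 : B2 → B2)
    (hτ1bij : Function.Bijective τ1) (hτ2bij : Function.Bijective τ2)
    (hτ1e : ∀ (i : I) (b : B1), Option.map τ1 (c1.e i b) = c1.e (τ i) (τ1 b))
    (hτ1f : ∀ (i : I) (b : B1), Option.map τ1 (c1.f i b) = c1.f (τ i) (τ1 b))
    (hτ2e : ∀ (i : I) (b : B2), Option.map τ2 (c2.e i b) = c2.e (τ i) (τ2 b))
    (hτ2f : ∀ (i : I) (b : B2), Option.map τ2 (c2.f i b) = c2.f (τ i) (τ2 b))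
    (σ : B1 × B2 → B2 × B1) (hσ : IsCrystalIso c1 c2 σ)
    (hστ : ∀ p : B1 × B2, σ (τ1 p.1, τ2 p.2) = (τ2 (σ p).1, τ1 (σ p).2))
    (H : B1 × B2 → ℤ) (hH : IsLocalEnergy i0 c1 c2 σ H)
    (u1 : B1) (u2 : B2) (hu : σ (u1, u2) = (u2, u1))
    (hHu : H (τ1 u1, τ2 u2) = H (u1, u2))
    (hconn : ∀ p : B1 × B2, ∃ J : List I, applyList (tensorE c1 c2) J (u1, u2) = some p)
    (b1 : B1) (b2 : B2) :
    H (b1, b2) - H (τ1 b1, τ2 b2) = ϖ (wt2 b2) - ϖ (wt2 (σ (b1, b2)).1) := by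

  -- eps / phi invariance under τ
  have heps2 : ∀ (i : I) (b : B2), c2.eps (τ i) (τ2 b) = c2.eps i b :=
    fun i b => epsOf_map (c2.e i) (c2.e (τ i)) τ2 (hτ2e i) b
  have heps1 : ∀ (i : I) (b : B1), c1.eps (τ i) (τ1 b) = c1.eps i b :=
    fun i b => epsOf_map (c1.e i) (c1.e (τ i)) τ1 (hτ1e i) b
  have hphi1 : ∀ (i : I) (b : B1), c1.phi (τ i) (τ1 b) = c1.phi i b :=
    fun i b => epsOf_map (c1.f i) (c1.f (τ i)) τ1 (hτ1f i) b
  have hphi2 : ∀ (i : I) (b : B2), c2.phi (τ i) (τ2 b) = c2.phi i b :=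
    fun i b => epsOf_map (c2.f i) (c2.f (τ i)) τ2 (hτ2f i) b
  have hτi0 : ∀ j : I, τ j = i0 ↔ j = t := by
    intro j
    constructor
    · intro h; exact τ.injective (h.trans hτt.symm)
    · intro h; rw [h, hτt]
  -- tensorE commutes with τ
  have htE : ∀ (i : I) (p : B1 × B2),
      tensorE c1 c2 (τ i) (τ1 p.1, τ2 p.2)
        = Option.map (fun r : B1 × B2 => (τ1 r.1, τ2 r.2)) (tensorE c1 c2 i p) := by
    intro i p
    unfold tensorE
    simp only [heps2, hphi1]
    split_ifs with hc
    · rw [← hτ1e]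
      cases c1.e i p.1 <;> rfl
    · rw [← hτ2e]
      cases c2.e i p.2 <;> rfl
  have key : ∀ (i : I) (p q : B1 × B2), tensorE c1 c2 i p = some q →
      H p - H (τ1 p.1, τ2 p.2) = ϖ (wt2 p.2) - ϖ (wt2 (σ p).1) →
      H q - H (τ1 q.1, τ2 q.2) = ϖ (wt2 q.2) - ϖ (wt2 (σ q).1) := by
    intro i p q heq hp
    have hσq : tensorE c2 c1 i (σ p) = some (σ q) := by
      have h := hσ.comm_e i p
      rw [heq] at h
      simpa using h.symm
    have hτq : tensorE c1 c2 (τ i) (τ1 p.1, τ2 p.2) = some (τ1 q.1, τ2 q.2) := by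
      rw [htE i p, heq]; rfl
    have hE := tensorE_eq c1 c2 i p q heq
    have hE' := tensorE_eq c2 c1 i (σ p) (σ q) hσq
    have hw2 : ϖ (wt2 q.2) = ϖ (wt2 p.2) + (if actsLeft c1 c2 i p then 0 else ϖ (α i)) := by
      rcases hE with ⟨hL, _, h2⟩ | ⟨hL, h2, _⟩
      · rw [if_pos hL, h2, add_zero]
      · rw [if_neg hL, hwt2 i p.2 q.2 h2, map_add]
    have hw2' : ϖ (wt2 (σ q).1)
        = ϖ (wt2 (σ p).1) + (if actsLeft c2 c1 i (σ p) then ϖ (α i) else 0) := by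
      rcases hE' with ⟨hL, h1, _⟩ | ⟨hL, _, h1⟩
      · rw [if_pos hL, hwt2 i (σ p).1 (σ q).1 h1, map_add]
      · rw [if_neg hL, h1, add_zero]
    by_cases hii0 : i = i0
    · subst hii0
      have hτne : τ i ≠ i := fun h => ht ((hτi0 i).mp h).symm
      have hΔτ : H (τ1 q.1, τ2 q.2) = H (τ1 p.1, τ2 p.2) :=
        hH.ne_zero (τ i) hτne _ _ hτq
      rw [hϖ0] at hw2 hw2'
      by_cases hL : actsLeft c1 c2 i p <;> by_cases hL' : actsLeft c2 c1 i (σ p)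
      · have hΔH := hH.zero_LL p q heq hL hL'
        rw [if_pos hL] at hw2; rw [if_pos hL'] at hw2'
        linarith
      · have hΔH := hH.zero_mixed p q heq (fun h => hL' (h.mp hL))
        rw [if_pos hL] at hw2; rw [if_neg hL'] at hw2'
        linarith
      · have hΔH := hH.zero_mixed p q heq (fun h => hL (h.mpr hL'))
        rw [if_neg hL] at hw2; rw [if_pos hL'] at hw2'
        linarith
      · have hΔH := hH.zero_RR p q heq hL hL'
        rw [if_neg hL] at hw2; rw [if_neg hL'] at hw2'
        linarith
    · by_cases hit : i = t
      · subst hit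
        have hΔH : H q = H p := hH.ne_zero i ht p q heq
        have hϖt : ϖ (α i) = 1 := by rw [hϖ i ht, if_pos rfl]
        rw [hτt] at hτq
        have hALp : actsLeft c1 c2 i0 (τ1 p.1, τ2 p.2) ↔ actsLeft c1 c2 i p := by
          show c2.eps i0 (τ2 p.2) ≤ c1.phi i0 (τ1 p.1) ↔ c2.eps i p.2 ≤ c1.phi i p.1
          rw [← hτt, heps2, hphi1]
        have hALσ : actsLeft c2 c1 i0 (σ (τ1 p.1, τ2 p.2)) ↔ actsLeft c2 c1 i (σ p) := by
          rw [hστ p]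
          show c1.eps i0 (τ1 (σ p).2) ≤ c2.phi i0 (τ2 (σ p).1)
            ↔ c1.eps i (σ p).2 ≤ c2.phi i (σ p).1
          rw [← hτt, heps1, hphi2]
        rw [hϖt] at hw2 hw2'
        by_cases hL : actsLeft c1 c2 i p <;> by_cases hL' : actsLeft c2 c1 i (σ p)
        · have hΔτ := hH.zero_LL _ _ hτq (hALp.mpr hL) (hALσ.mpr hL')
          rw [if_pos hL] at hw2; rw [if_pos hL'] at hw2'
          linarith
        · have hΔτ := hH.zero_mixed _ _ hτq
            (fun h => hL' (hALσ.mp (h.mp (hALp.mpr hL))))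
          rw [if_pos hL] at hw2; rw [if_neg hL'] at hw2'
          linarith
        · have hΔτ := hH.zero_mixed _ _ hτq
            (fun h => hL (hALp.mp (h.mpr (hALσ.mpr hL'))))
          rw [if_neg hL] at hw2; rw [if_pos hL'] at hw2'
          linarith
        · have hΔτ := hH.zero_RR _ _ hτq
            (fun h => hL (hALp.mp h)) (fun h => hL' (hALσ.mp h))
          rw [if_neg hL] at hw2; rw [if_neg hL'] at hw2'
          linarith
      · have hΔH : H q = H p := hH.ne_zero i hii0 p q heq
        have hτne : τ i ≠ i0 := fun h => hit ((hτi0 i).mp h)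
        have hΔτ : H (τ1 q.1, τ2 q.2) = H (τ1 p.1, τ2 p.2) :=
          hH.ne_zero (τ i) hτne _ _ hτq
        have hϖi : ϖ (α i) = 0 := by rw [hϖ i hii0, if_neg hit]
        rw [hϖi] at hw2 hw2'
        simp only [ite_self] at hw2 hw2'
        linarith
  suffices hmain : ∀ p : B1 × B2, H p - H (τ1 p.1, τ2 p.2) = ϖ (wt2 p.2) - ϖ (wt2 (σ p).1) by
    exact hmain (b1, b2)
  have step : ∀ (J : List I) (x p : B1 × B2),
      H x - H (τ1 x.1, τ2 x.2) = ϖ (wt2 x.2) - ϖ (wt2 (σ x).1) →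
      applyList (tensorE c1 c2) J x = some p →
      H p - H (τ1 p.1, τ2 p.2) = ϖ (wt2 p.2) - ϖ (wt2 (σ p).1) := by
    intro J
    induction J with
    | nil =>
        intro x p hx h
        simp only [applyList, List.foldl_nil, Option.some.injEq] at h
        rw [← h]; exact hx
    | cons j J ih =>
        intro x p hx h
        simp only [applyList, List.foldl_cons, Option.bind_some] at h
        cases he : tensorE c1 c2 j x with
        | none =>
            rw [he] at h
            rw [foldl_bind_none] at h
            exact absurd h (by simp)
        | some y =>
            rw [he] at h
            exact ih y p (key j x y he hx) h
  intro p
  obtain ⟨J, hJ⟩ := hconn p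
  refine step J (u1, u2) p ?_ hJ
  simp [hu, hHu]
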